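/- Monotonicity of the discrete L1 kernels: for every α ∈ (0,1), every N ≥ 2, every partition 0 = t_0 < t_1 < ⋯ < t_N = T, and all indices 2 ≤ j ≤ n ≤ N, one has 0 ≤ K^{n,j−1}_{1−α} < K^{n,j}_{1−α}. -/

import Mathlib

open Finset

/-- The kernel `k_β(s) = s^(β-1)/Γ(β)`. -/
noncomputable def kker (β s : ℝ) : ℝ := s ^ (β - 1) / Real.Gamma β

/-- The discrete L1 kernels `K^{n,j}_{1-α}`. -/
noncomputable def Kd (α : ℝ) (t : ℕ → ℝ) (n j : ℕ) : ℝ :=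
  (kker (2 - α) (t n - t (j - 1)) - kker (2 - α) (t n - t j)) / (t j - t (j - 1))

/-- The complementary discrete kernels `P^{n,i}_α`, defined by downward recursion. -/
noncomputable def Pd (α : ℝ) (t : ℕ → ℝ) (n i : ℕ) : ℝ :=
  if i = n then 1 / Kd α t n n
  else (1 / Kd α t i i) *
    ∑ j ∈ (Finset.Ioc i n).attach,
      Pd α t n j.1 * (Kd α t j.1 (i + 1) - Kd α t j.1 i)
termination_by n - i
decreasing_by
  have h := Finset.mem_Ioc.mp j.2
  omega

/-- Monotonicity of the discrete L1 kernels: for `2 ≤ j ≤ n ≤ N`,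
`0 ≤ K^{n,j-1}_{1-α} < K^{n,j}_{1-α}`. -/
theorem discrete_L1_kernel_monotone
    (α T : ℝ) (N : ℕ) (t : ℕ → ℝ)
    (hα0 : 0 < α) (hα1 : α < 1) (hT : 0 < T) (hN : 2 ≤ N)
    (ht0 : t 0 = 0) (htN : t N = T)
    (hmono : ∀ j, j < N → t j < t (j + 1)) :
    ∀ n j, 2 ≤ j → j ≤ n → n ≤ N →
      0 ≤ Kd α t n (j - 1) ∧ Kd α t n (j - 1) < Kd α t n j := by
  intro n j hj2 hjn hnN
  have hΓ : 0 < Real.Gamma (2 - α) := Real.Gamma_pos_of_pos (by linarith)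
  -- strict monotonicity of t on [0, N]
  have hst : ∀ k, k ≤ N → ∀ i, i < k → t i < t k := by
    intro k
    induction k with
    | zero => omega
    | succ m ih =>
      intro hk i hi
      have hm : t m < t (m + 1) := hmono m (by omega)
      rcases Nat.lt_succ_iff_lt_or_eq.mp hi with h | h
      · exact (ih (by omega) i h).trans hm
      · rw [h]; exact hm
  set p : ℝ := 1 - α with hp
  set x : ℝ := t n - t j with hxdef
  set y : ℝ := t n - t (j - 1) with hydef
  set z : ℝ := t n - t (j - 2) with hzdef
  have hxy : x < y := by
    have := hst j (le_trans hjn hnN) (j - 1) (by omega)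
    simp only [hxdef, hydef]; linarith
  have hyz : y < z := by
    have := hst (j - 1) (by omega) (j - 2) (by omega)
    simp only [hydef, hzdef]; linarith
  have hx0 : (0:ℝ) ≤ x := by
    rcases eq_or_lt_of_le hjn with h | h
    · simp [hxdef, h]
    · have := hst n hnN j h
      simp only [hxdef]; linarith
  have hy0 : (0:ℝ) ≤ y := le_of_lt (lt_of_le_of_lt hx0 hxy)
  have hexp : (2:ℝ) - α - 1 = p := by rw [hp]; ring
  have hj11 : j - 1 - 1 = j - 2 := by omega
  have e1 : Kd α t n j = ((y ^ p - x ^ p) / (y - x)) / Real.Gamma (2 - α) := by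
    simp only [Kd, kker, hexp, ← hxdef, ← hydef]
    have : t j - t (j - 1) = y - x := by simp only [hxdef, hydef]; ring
    rw [this]; ring
  have e2 : Kd α t n (j - 1) = ((z ^ p - y ^ p) / (z - y)) / Real.Gamma (2 - α) := by
    simp only [Kd, kker, hexp, hj11, ← hydef, ← hzdef]
    have : t (j - 1) - t (j - 2) = z - y := by simp only [hydef, hzdef]; ring
    rw [this]; ring
  constructor
  · rw [e2]
    have hzy : y ^ p ≤ z ^ p :=
      Real.rpow_le_rpow hy0 hyz.le (by rw [hp]; linarith)
    exact div_nonneg (div_nonneg (by linarith) (by linarith)) hΓ.le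
  · rw [e1, e2]
    have hconc : StrictConcaveOn ℝ (Set.Ici 0) fun s : ℝ => s ^ p :=
      Real.strictConcaveOn_rpow (by rw [hp]; linarith) (by rw [hp]; linarith)
    have hslope := hconc.slope_anti_adjacent (Set.mem_Ici.mpr hx0)
      (Set.mem_Ici.mpr (by linarith : (0:ℝ) ≤ z)) hxy hyz
    exact div_lt_div_of_pos_right hslope hΓ
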